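/- For every integer i with 1 ≤ i ≤ n-1, one has σ_s(g, g^i) = 𝕢^{-s}. In particular σ_s(g, g) = 𝕢^{-s}. -/

import Mathlib

/-- The 3-cocycle `Φ_s` on the cyclic group `ℤ_n` (written additively via `ZMod n`,
where `g^i` corresponds to `(i : ZMod n)`), defined by
`Φ_s(g^i, g^j, g^k) = 𝕢^{s i (j+k-(j+k)')/n}` for `0 ≤ i,j,k ≤ n-1`,
where `i'` is the remainder of `i` modulo `n`. -/
noncomputable def PhiCocycle (n s : ℕ) (q : ℂ) (x y z : ZMod n) : ℂ :=
  q ^ (s * x.val * ((y.val + z.val - (y.val + z.val) % n) / n))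

/-- The 2-cocycle `σ_s` on `ℤ_n` defined from `Φ_s` by
`σ_s(x,y) = Φ_s(x,y,g)·Φ_s(xy,y⁻¹,x⁻¹)·Φ_s(x,yg,y⁻¹) / (Φ_s(xyg,y⁻¹,x⁻¹)·Φ_s(x,y,y⁻¹))`,
where the generator `g` corresponds to `(1 : ZMod n)`. -/
noncomputable def SigmaCocycle (n s : ℕ) (q : ℂ) (x y : ZMod n) : ℂ :=
  PhiCocycle n s q x y 1 * PhiCocycle n s q (x + y) (-y) (-x) *
      PhiCocycle n s q x (y + 1) (-y) /
    (PhiCocycle n s q (x + y + 1) (-y) (-x) * PhiCocycle n s q x y (-y))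

lemma phiCocycle_eq (n s : ℕ) (hn : n ≠ 0) (q : ℂ) (x y z : ZMod n) :
    PhiCocycle n s q x y z = q ^ (s * x.val * ((y.val + z.val) / n)) := by
  unfold PhiCocycle
  congr 2
  have h := Nat.mod_add_div (y.val + z.val) n
  have h2 : y.val + z.val - (y.val + z.val) % n = n * ((y.val + z.val) / n) := by omega
  rw [h2, Nat.mul_div_cancel_left _ (Nat.pos_of_ne_zero hn)]

/-- For `1 ≤ i ≤ n-1`, `σ_s(g, g^i) = 𝕢^{-s}`; in particular, `σ_s(g,g) = 𝕢^{-s}`. -/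
theorem sigmaCocycle_g_pow
    (n : ℕ) (hn : 2 ≤ n) (q : ℂ) (hq : IsPrimitiveRoot q n)
    (s : ℕ) (hs : s ≤ n - 1) :
    (∀ i : ℕ, 1 ≤ i → i ≤ n - 1 →
      SigmaCocycle n s q 1 (i : ZMod n) = q ^ (-(s : ℤ))) ∧
    SigmaCocycle n s q 1 1 = q ^ (-(s : ℤ)) := by
  haveI : NeZero n := ⟨by omega⟩
  haveI : Fact (1 < n) := ⟨by omega⟩
  have hq0 : q ≠ 0 := hq.ne_zero (by omega)
  have qn : q ^ n = 1 := hq.pow_eq_one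
  have key : ∀ i : ℕ, 1 ≤ i → i ≤ n - 1 →
      SigmaCocycle n s q 1 (i : ZMod n) = q ^ (-(s : ℤ)) := by
    intro i h1i hin
    have hi : i < n := by omega
    have v1 : (1 : ZMod n).val = 1 := ZMod.val_one n
    have vi : ((i : ZMod n)).val = i := by
      rw [ZMod.val_natCast, Nat.mod_eq_of_lt hi]
    have hine : (i : ZMod n) ≠ 0 := by
      rw [Ne, ZMod.natCast_eq_zero_iff]
      intro h
      exact absurd (Nat.le_of_dvd (by omega) h) (by omega)
    have h1ne : (1 : ZMod n) ≠ 0 := by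
      intro h
      have := congrArg ZMod.val h
      rw [v1, ZMod.val_zero] at this
      omega
    have vmi : (-(i : ZMod n)).val = n - i := by
      rw [ZMod.neg_val, if_neg hine, vi]
    have vm1 : (-1 : ZMod n).val = n - 1 := by
      rw [ZMod.neg_val, if_neg h1ne, v1]
    have v1i : ((1 : ZMod n) + i).val = (i + 1) % n := by
      rw [show ((1 : ZMod n) + i) = ((i + 1 : ℕ) : ZMod n) by push_cast; ring,
        ZMod.val_natCast]
    have v2i : ((1 : ZMod n) + i + 1).val = (i + 2) % n := by
      rw [show ((1 : ZMod n) + i + 1) = ((i + 2 : ℕ) : ZMod n) by push_cast; ring,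
        ZMod.val_natCast]
    have vi1 : ((i : ZMod n) + 1).val = (i + 1) % n := by
      rw [show ((i : ZMod n) + 1) = ((i + 1 : ℕ) : ZMod n) by push_cast; ring,
        ZMod.val_natCast]
    rw [SigmaCocycle]
    rw [phiCocycle_eq n s (by omega) q, phiCocycle_eq n s (by omega) q,
      phiCocycle_eq n s (by omega) q, phiCocycle_eq n s (by omega) q,
      phiCocycle_eq n s (by omega) q]
    rw [v1, vi, vmi, vm1, v1i, v2i, vi1]
    have e5 : (i + (n - i)) / n = 1 := Nat.div_eq_of_lt_le (by omega) (by omega)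
    have e2 : (n - i + (n - 1)) / n = 1 := Nat.div_eq_of_lt_le (by omega) (by omega)
    rw [zpow_neg, zpow_natCast]
    rcases eq_or_lt_of_le (show i ≤ n - 1 from hin) with hA | hA
    · -- i = n - 1
      rw [show i + 1 = n by omega, Nat.mod_self, Nat.div_self (by omega),
        show i + 2 = n + 1 by omega, Nat.add_mod_left, Nat.mod_eq_of_lt (by omega : 1 < n),
        show (0 + (n - i)) / n = 0 from Nat.div_eq_of_lt (by omega), e2, e5]
      field_simp
      simp
    · -- i < n - 1
      have hmod1 : (i + 1) % n = i + 1 := Nat.mod_eq_of_lt (by omega)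
      have e1 : (i + 1) / n = 0 := Nat.div_eq_of_lt (by omega)
      have e3 : (i + 1 + (n - i)) / n = 1 := Nat.div_eq_of_lt_le (by omega) (by omega)
      rw [hmod1, e1, e2, e3, e5]
      simp only [Nat.mul_one, Nat.mul_zero, Nat.zero_mul, pow_zero, one_mul, mul_one]
      rcases eq_or_lt_of_le (show i ≤ n - 2 by omega) with hB | hB
      · -- i = n - 2
        rw [show i + 2 = n by omega, Nat.mod_self]
        have key2 : q ^ (s * (i + 1)) * q ^ s = 1 := by
          rw [← pow_add, show s * (i + 1) + s = s * n by rw [show n = i + 2 by omega]; ring,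
            mul_comm, pow_mul, qn, one_pow]
        have hinv : q ^ (s * (i + 1)) = (q ^ s)⁻¹ := eq_inv_of_mul_eq_one_left key2
        rw [hinv]
        field_simp
        simp
      · -- i ≤ n - 3
        rw [Nat.mod_eq_of_lt (by omega : i + 2 < n)]
        have key2 : q ^ (s * (i + 2)) = q ^ (s * (i + 1)) * q ^ s := by
          rw [← pow_add, show s * (i + 1) + s = s * (i + 2) by ring]
        rw [key2]
        field_simp
  exact ⟨key, by simpa using key 1 le_rfl (by omega)⟩
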